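/- arXiv:1802.08672 — 3 statements merged into one kernel-verified Lean document; each statement's English description precedes it below -/
import Mathlib

section
/- Let π be a permutation of length n and let A ⊆ B ⊆ {0,...,n}×{0,...,n}. Then the interval [π^A, π^B] in the mesh pattern poset is isomorphic as a poset to the boolean lattice of subsets of a set of size |B| − |A|, and consequently the Möbius function satisfies μ(π^A, π^B) = (−1)^{|B|−|A|}. -/
/-!
# The poset of mesh patterns

A mesh pattern is a permutation of `{1, ..., len}` together with a set of shaded
boxes in the `(len+1) × (len+1)` grid (boxes are indexed by their south-west corner,
so boxes have coordinates in `{0, ..., len} × {0, ..., len}`).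

We normalise the permutation as a function `ℕ → ℕ` (using 1-based indexing) which is
`0` outside of `[1, len]`; this makes equality of mesh patterns coincide with equality
of the underlying data.
-/

structure MeshPattern where
  len : ℕ
  perm : ℕ → ℕ
  sh : Finset (ℕ × ℕ)
  perm_mem : ∀ i, 1 ≤ i → i ≤ len → 1 ≤ perm i ∧ perm i ≤ len
  perm_zero : ∀ i, i = 0 ∨ len < i → perm i = 0
  perm_inj : ∀ i j, 1 ≤ i → i ≤ len → 1 ≤ j → j ≤ len → perm i = perm j → i = j
  perm_surj : ∀ v, 1 ≤ v → v ≤ len → ∃ i, 1 ≤ i ∧ i ≤ len ∧ perm i = v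
  sh_mem : ∀ q ∈ sh, q.1 ≤ len ∧ q.2 ≤ len

namespace MeshPattern

/-- The (1-based) position of the value `v` in the underlying permutation of `m`. -/
noncomputable def pos (m : MeshPattern) (v : ℕ) : ℕ := Function.invFun m.perm v

/-- The dimension of a mesh pattern: length of the permutation plus number of shaded boxes. -/
def dim (m : MeshPattern) : ℕ := m.len + m.sh.card

/-- Given (the position map of an occurrence) `η` of `m` in `p`, the extended column
boundary map: pattern column boundary `i` (for `0 ≤ i ≤ m.len + 1`) is sent to the
corresponding column boundary in `p`.  Boxes of `p` with first coordinate `a` satisfying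
`colExt m p η i ≤ a < colExt m p η (i+1)` are exactly the boxes lying horizontally
within the region corresponding to pattern boxes with first coordinate `i`. -/
def colExt (m p : MeshPattern) (η : ℕ → ℕ) (i : ℕ) : ℕ :=
  if i = 0 then 0 else if i ≤ m.len then η i else p.len + 1

/-- The analogous extended row (value) boundary map. -/
noncomputable def valExt (m p : MeshPattern) (η : ℕ → ℕ) (j : ℕ) : ℕ :=
  if j = 0 then 0 else if j ≤ m.len then p.perm (η (m.pos j)) else p.len + 1

/-- The box `(a, b)` of `p` lies in the region `R_η(i, j)` of the box `(i, j)` of `m`. -/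
def inRegion (m p : MeshPattern) (η : ℕ → ℕ) (i j a b : ℕ) : Prop :=
  colExt m p η i ≤ a ∧ a < colExt m p η (i + 1) ∧
    valExt m p η j ≤ b ∧ b < valExt m p η (j + 1)

/-- The point of `p` at position `y` lies in the open interior of the region `R_η(i, j)`. -/
def interiorPt (m p : MeshPattern) (η : ℕ → ℕ) (i j y : ℕ) : Prop :=
  colExt m p η i < y ∧ y < colExt m p η (i + 1) ∧
    valExt m p η j < p.perm y ∧ p.perm y < valExt m p η (j + 1)

/-- `η` is an occurrence of the mesh pattern `m` in the mesh pattern `p`: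
a (normalised) strictly increasing choice of positions realising the underlying
classical pattern, such that for every shaded box of `m` the corresponding region of `p`
contains no point of `p` in its interior and consists entirely of shaded boxes of `p`. -/
structure IsOcc (m p : MeshPattern) (η : ℕ → ℕ) : Prop where
  zero : ∀ i, i = 0 ∨ m.len < i → η i = 0
  mem : ∀ i, 1 ≤ i → i ≤ m.len → 1 ≤ η i ∧ η i ≤ p.len
  mono : ∀ i j, 1 ≤ i → i < j → j ≤ m.len → η i < η j
  pattern : ∀ i j, 1 ≤ i → i ≤ m.len → 1 ≤ j → j ≤ m.len →
    (m.perm i < m.perm j ↔ p.perm (η i) < p.perm (η j))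
  no_point : ∀ q ∈ m.sh, ∀ y, 1 ≤ y → y ≤ p.len → ¬ interiorPt m p η q.1 q.2 y
  shaded : ∀ q ∈ m.sh, ∀ a b, inRegion m p η q.1 q.2 a b → (a, b) ∈ p.sh

/-- The mesh pattern poset: `m ≤ p` iff there is an occurrence of `m` in `p`. -/
instance : LE MeshPattern := ⟨fun m p => ∃ η, IsOcc m p η⟩

instance : LT MeshPattern := ⟨fun m p => m ≤ p ∧ m ≠ p⟩

/-- `b` covers `a` in the mesh pattern poset. -/
def CovByM (a b : MeshPattern) : Prop := a < b ∧ ¬ ∃ z, a < z ∧ z < b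

open Classical in
/-- The Möbius function of a (locally finite) partial order `r`, computed with a fuel
parameter: `muFuel r n a b` is the Möbius function `μ(a, b)` provided `n` is at least the
length of the longest chain from `a` to `b` (with the convention `μ(a, b) = 0` if
`¬ r a b`). -/
noncomputable def muFuel {α : Type*} (r : α → α → Prop) : ℕ → α → α → ℤ
  | 0, a, b => if a = b then 1 else 0
  | n + 1, a, b =>
      if a = b then 1
      else if r a b then - ∑ᶠ c ∈ {c | r a c ∧ r c b ∧ c ≠ b}, muFuel r n a c
      else 0

/-- The Möbius function of the mesh pattern poset.  Since every chain from `m` to `p` has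
length at most `dim p`, the fuel `dim p + 1` is sufficient, so this is the genuine Möbius
function: `mu m m = 1`, `mu m p = -∑_{m ≤ c < p} mu m c` for `m < p`, and `mu m p = 0`
when `m ≰ p`. -/
noncomputable def mu (m p : MeshPattern) : ℤ := muFuel (· ≤ ·) (p.dim + 1) m p

/-- The classical permutation poset `𝓟`, realised as the subposet of unshaded mesh
patterns (for unshaded patterns, mesh occurrence is exactly classical pattern
containment).  Its Möbius function. -/
noncomputable def muP (σ π : {m : MeshPattern // m.sh = ∅}) : ℤ :=
  muFuel (· ≤ ·) (π.1.len + 1) σ π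

/-- The mesh pattern with underlying identity permutation of length `n`
and shaded boxes `s`. -/
def ofId (n : ℕ) (s : Finset (ℕ × ℕ)) (hs : ∀ q ∈ s, q.1 ≤ n ∧ q.2 ≤ n) : MeshPattern where
  len := n
  perm := fun i => if 1 ≤ i ∧ i ≤ n then i else 0
  sh := s
  perm_mem := by intro i h1 h2; (try dsimp only); rw [if_pos ⟨h1, h2⟩]; omega
  perm_zero := by intro i h; (try dsimp only); rw [if_neg]; omega
  perm_inj := by intro i j h1 h2 h3 h4 h; (try dsimp only at h); rw [if_pos ⟨h1, h2⟩, if_pos ⟨h3, h4⟩] at h; omega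
  perm_surj := by
    intro v h1 h2; exact ⟨v, h1, h2, by (try dsimp only); rw [if_pos ⟨h1, h2⟩]⟩
  sh_mem := hs

/-- The mesh pattern with underlying decreasing permutation of length `n`
and shaded boxes `s`. -/
def ofRev (n : ℕ) (s : Finset (ℕ × ℕ)) (hs : ∀ q ∈ s, q.1 ≤ n ∧ q.2 ≤ n) : MeshPattern where
  len := n
  perm := fun i => if 1 ≤ i ∧ i ≤ n then n + 1 - i else 0
  sh := s
  perm_mem := by intro i h1 h2; (try dsimp only); rw [if_pos ⟨h1, h2⟩]; omega
  perm_zero := by intro i h; (try dsimp only); rw [if_neg]; omega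
  perm_inj := by intro i j h1 h2 h3 h4 h; (try dsimp only at h); rw [if_pos ⟨h1, h2⟩, if_pos ⟨h3, h4⟩] at h; omega
  perm_surj := by
    intro v h1 h2
    exact ⟨n + 1 - v, by omega, by omega, by (try dsimp only); rw [if_pos ⟨by omega, by omega⟩]; omega⟩
  sh_mem := hs

/-- The unshaded singleton mesh pattern `1^∅`. -/
def one0 : MeshPattern := ofId 1 ∅ (by simp)

/-- The empty mesh pattern `ε^∅`. -/
def eps0 : MeshPattern := ofId 0 ∅ (by simp)

/-- The empty mesh pattern `ε^{(0,0)}` with its single box shaded. -/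
def eps00 : MeshPattern := ofId 0 {(0, 0)} (by decide)

/-- The singleton mesh patterns `1^{(a,b)}` for `a b ∈ {0,1}`. -/
def one00 : MeshPattern := ofId 1 {(0, 0)} (by decide)
def one10 : MeshPattern := ofId 1 {(1, 0)} (by decide)
def one01 : MeshPattern := ofId 1 {(0, 1)} (by decide)
def one11 : MeshPattern := ofId 1 {(1, 1)} (by decide)

/-- The mesh pattern `21^{(0,0),(1,0)}`. -/
def pat21 : MeshPattern := ofRev 2 {(0, 0), (1, 0)} (by decide)

/-- Replace the shading of `p` by a subset `A ⊆ sh p` (same underlying permutation):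
this is the mesh pattern `(cl p)^A`. -/
def reshade (p : MeshPattern) (A : Finset (ℕ × ℕ)) (hA : A ⊆ p.sh) : MeshPattern :=
  { p with sh := A, sh_mem := fun q hq => p.sh_mem q (hA hq) }

/-- The occurrence `η` of `s` in `p` uses the shaded box `(a, b) ∈ sh p`. -/
def UsesBox (s p : MeshPattern) (η : ℕ → ℕ) (a b : ℕ) : Prop :=
  (a, b) ∈ p.sh ∧ ∃ i j, (i, j) ∈ s.sh ∧ inRegion s p η i j a b

/-- The position map of the occurrence of `p − x` in `p` avoiding the point at
position `x`. -/
def etaDel (p : MeshPattern) (x : ℕ) : ℕ → ℕ := fun i =>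
  if 1 ≤ i ∧ i ≤ p.len - 1 then (if i < x then i else i + 1) else 0

/-- The underlying permutation of the pattern obtained from `p` by deleting the point at
position `x`. -/
def delPerm (p : MeshPattern) (x : ℕ) : ℕ → ℕ := fun i =>
  if 1 ≤ i ∧ i ≤ p.len - 1 then
    (if p.perm (etaDel p x i) < p.perm x then p.perm (etaDel p x i)
     else p.perm (etaDel p x i) - 1)
  else 0

/-- `q` is the mesh pattern `p − x` obtained from `p` by deleting the point at position
`x` (where `1 ≤ x ≤ len p`): the underlying permutation is obtained by deleting that
letter, and a box of `q` is shaded exactly when the corresponding region of `p` (under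
the occurrence `etaDel p x`) is entirely shaded and contains no point of `p` in its
interior.  In particular `etaDel p x` is an occurrence of `q` in `p`. -/
def IsDeletion (p : MeshPattern) (x : ℕ) (q : MeshPattern) : Prop :=
  1 ≤ x ∧ x ≤ p.len ∧ q.len + 1 = p.len ∧ q.perm = delPerm p x ∧
    ∀ i j : ℕ, ((i, j) ∈ q.sh ↔ i ≤ q.len ∧ j ≤ q.len ∧
      (∀ a b, inRegion q p (etaDel p x) i j a b → (a, b) ∈ p.sh) ∧
      ∀ y, 1 ≤ y → y ≤ p.len → ¬ interiorPt q p (etaDel p x) i j y)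

/-- Deleting the point at position `x` of `p` (with `q = p − x`) merges shadings:
some shaded box of `q` corresponds to more than one shaded box of `p`. -/
def MergesShadings (p : MeshPattern) (x : ℕ) (q : MeshPattern) : Prop :=
  ∃ i j, (i, j) ∈ q.sh ∧ ∃ a b a' b', (a, b) ≠ (a', b') ∧ (a, b) ∈ p.sh ∧
    (a', b') ∈ p.sh ∧ inRegion q p (etaDel p x) i j a b ∧
    inRegion q p (etaDel p x) i j a' b'

/-- `f 0 ⋖ f 1 ⋖ ⋯ ⋖ f k` is a maximal chain of length `k` from `a` to `b`. -/
def IsMaxChain (a b : MeshPattern) (k : ℕ) (f : ℕ → MeshPattern) : Prop :=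
  f 0 = a ∧ f k = b ∧ ∀ i < k, CovByM (f i) (f (i + 1))

/-- Underlying permutation of the direct sum `s ⊕ t`. -/
def dsumPerm (s t : MeshPattern) : ℕ → ℕ := fun i =>
  if i ≤ s.len then s.perm i
  else if i ≤ s.len + t.len then t.perm (i - s.len) + s.len
  else 0

/-- Shading of the direct sum `s ⊕ t`: the shadings of `s` and of `t` (translated), where
boxes on the shared boundary are extended to the new boundary (north/east for boxes of
`s`, south/west for boxes of `t`). -/
def dsumSh (s t : MeshPattern) : Finset (ℕ × ℕ) :=
  s.sh ∪ t.sh.image (fun q => (q.1 + s.len, q.2 + s.len)) ∪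
    (s.sh.filter (fun q => q.2 = s.len)).biUnion
      (fun q => (Finset.range (t.len + 1)).image (fun k => (q.1, s.len + k))) ∪
    (s.sh.filter (fun q => q.1 = s.len)).biUnion
      (fun q => (Finset.range (t.len + 1)).image (fun k => (s.len + k, q.2))) ∪
    (t.sh.filter (fun q => q.2 = 0)).biUnion
      (fun q => (Finset.range (s.len + 1)).image (fun k => (q.1 + s.len, k))) ∪
    (t.sh.filter (fun q => q.1 = 0)).biUnion
      (fun q => (Finset.range (s.len + 1)).image (fun k => (k, q.2 + s.len)))

/-- `r = s ⊕ t` is the direct sum of the mesh patterns `s` and `t` (defined when the top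
right corner box of `s` and the bottom left corner box of `t` are not shaded). -/
def IsDSum (s t r : MeshPattern) : Prop :=
  (s.len, s.len) ∉ s.sh ∧ (0, 0) ∉ t.sh ∧
    r.len = s.len + t.len ∧ r.perm = dsumPerm s t ∧ r.sh = dsumSh s t

/-- A mesh pattern is indecomposable if it cannot be written as a direct sum `a ⊕ b`
with neither `a` nor `b` equal to it. -/
def Indecomposable (m : MeshPattern) : Prop :=
  ¬ ∃ s t, s ≠ m ∧ t ≠ m ∧ IsDSum s t m

/-- `SumOfList L m`: `m` is the direct sum of the list `L` of mesh patterns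
(the empty list summing to the empty pattern `ε^∅`). -/
def SumOfList : List MeshPattern → MeshPattern → Prop
  | [], m => m.len = 0 ∧ m.sh = ∅
  | [a], m => a = m
  | a :: b :: rest, m => ∃ r, SumOfList (b :: rest) r ∧ IsDSum a r m

/-- Underlying permutation of the skew sum `s ⊖ t`. -/
def sksumPerm (s t : MeshPattern) : ℕ → ℕ := fun i =>
  if i = 0 then 0
  else if i ≤ s.len then s.perm i + t.len
  else if i ≤ s.len + t.len then t.perm (i - s.len)
  else 0

/-- Shading of the skew sum `s ⊖ t` (s placed to the north west of `t`), with boxes on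
the shared boundary extended to the new boundary. -/
def sksumSh (s t : MeshPattern) : Finset (ℕ × ℕ) :=
  s.sh.image (fun q => (q.1, q.2 + t.len)) ∪ t.sh.image (fun q => (q.1 + s.len, q.2)) ∪
    (s.sh.filter (fun q => q.1 = s.len)).biUnion
      (fun q => (Finset.range (t.len + 1)).image (fun k => (s.len + k, q.2 + t.len))) ∪
    (s.sh.filter (fun q => q.2 = 0)).biUnion
      (fun q => (Finset.range (t.len + 1)).image (fun k => (q.1, k))) ∪
    (t.sh.filter (fun q => q.2 = t.len)).biUnion
      (fun q => (Finset.range (s.len + 1)).image (fun k => (q.1 + s.len, t.len + k))) ∪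
    (t.sh.filter (fun q => q.1 = 0)).biUnion
      (fun q => (Finset.range (s.len + 1)).image (fun k => (k, q.2)))

/-- `r = s ⊖ t` is the skew sum of the mesh patterns `s` and `t` (defined when the bottom
right corner box of `s` and the top left corner box of `t` are not shaded). -/
def IsSkewSum (s t r : MeshPattern) : Prop :=
  (s.len, 0) ∉ s.sh ∧ (0, t.len) ∉ t.sh ∧
    r.len = s.len + t.len ∧ r.perm = sksumPerm s t ∧ r.sh = sksumSh s t

/-- A mesh pattern is skew-indecomposable if it cannot be written as a skew sum `a ⊖ b`
with neither `a` nor `b` equal to it. -/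
def SkewIndecomposable (m : MeshPattern) : Prop :=
  ¬ ∃ s t, s ≠ m ∧ t ≠ m ∧ IsSkewSum s t m

/-- Connectivity (zig-zag of comparabilities) inside a subset `I` of the mesh pattern
poset. -/
def ConnIn (I : Set MeshPattern) (a b : MeshPattern) : Prop :=
  Relation.ReflTransGen (fun u v => u ∈ I ∧ v ∈ I ∧ (u ≤ v ∨ v ≤ u)) a b

/-- The interval `[m, p]` is strongly disconnected: its open interior has at least two
connected components each containing more than one element. -/
def StronglyDisconnectedInterval (m p : MeshPattern) : Prop :=
  ∃ a b, (m < a ∧ a < p) ∧ (m < b ∧ b < p) ∧ ¬ ConnIn {c | m < c ∧ c < p} a b ∧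
    (∃ a', (m < a' ∧ a' < p) ∧ a' ≠ a ∧ ConnIn {c | m < c ∧ c < p} a a') ∧
    (∃ b', (m < b' ∧ b' < p) ∧ b' ≠ b ∧ ConnIn {c | m < c ∧ c < p} b b')

/-- The occurrence of `m` in `m ⊕ m` (or `m ⊖ m`) as the first `|m|` points. -/
def eta1 (m : MeshPattern) : ℕ → ℕ := fun i => if 1 ≤ i ∧ i ≤ m.len then i else 0

/-- The occurrence of `m` in `m ⊕ m` (or `m ⊖ m`) as the last `|m|` points. -/
def eta2 (m : MeshPattern) : ℕ → ℕ := fun i => if 1 ≤ i ∧ i ≤ m.len then i + m.len else 0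

/-- `i` (with `2 ≤ i ≤ len`) is the position of an adjacency tail: the letter at
position `i` differs by one from the letter at position `i - 1`. -/
def IsAdjTail (m : MeshPattern) (i : ℕ) : Prop :=
  2 ≤ i ∧ i ≤ m.len ∧ (m.perm i = m.perm (i - 1) + 1 ∨ m.perm (i - 1) = m.perm i + 1)

open Classical in
/-- `adj(cl m)`: the number of adjacency tails of the underlying permutation of `m`. -/
noncomputable def adjCount (m : MeshPattern) : ℕ :=
  ((Finset.range (m.len + 1)).filter (fun i => IsAdjTail m i)).card

/-- The total number of mesh patterns of length `n`. -/
def Tcount (n : ℕ) : ℕ := n.factorial * 2 ^ ((n + 1) ^ 2)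

end MeshPattern

/-- Binary words, partially ordered by (not necessarily contiguous) subword containment:
the poset `𝓦`. -/
structure Word where
  toList : List Bool

instance : LE Word := ⟨fun u w => u.toList.Sublist w.toList⟩

/-- The binary word associated to a mesh pattern `m` in the class `Γ`: it has length
`|m| - 1`, and for each letter `i` with `2 ≤ i ≤ |m|` the corresponding entry is
`false` (i.e. `0`) if the letter `i` appears before the letter `1` in `cl m`,
and `true` (i.e. `1`) otherwise. -/
noncomputable def MeshPattern.wordOf (m : MeshPattern) : List Bool :=
  (List.range (m.len - 1)).map (fun k => if m.pos (k + 2) < m.pos 1 then false else true)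

namespace MeshPattern


/-! ### Auxiliary lemmas -/

lemma ext' {m p : MeshPattern} (h1 : m.len = p.len) (h2 : m.perm = p.perm)
    (h3 : m.sh = p.sh) : m = p := by
  cases m; cases p
  simp only at h1 h2 h3
  subst h1; subst h2; subst h3
  rfl

lemma pos_spec (m : MeshPattern) {v : ℕ} (h1 : 1 ≤ v) (h2 : v ≤ m.len) :
    1 ≤ m.pos v ∧ m.pos v ≤ m.len ∧ m.perm (m.pos v) = v := by
  obtain ⟨i, hi1, hi2, hi3⟩ := m.perm_surj v h1 h2
  have he : m.perm (m.pos v) = v := Function.invFun_eq ⟨i, hi3⟩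
  refine ⟨?_, ?_, he⟩ <;> by_contra h
  · have := m.perm_zero (m.pos v) (Or.inl (by omega)); omega
  · have := m.perm_zero (m.pos v) (Or.inr (by omega)); omega

lemma colExt_eta1 {m p : MeshPattern} (hlen : m.len = p.len) {i : ℕ} (hi : i ≤ m.len + 1) :
    colExt m p (eta1 m) i = i := by
  unfold colExt eta1
  split_ifs <;> omega

lemma valExt_eta1 {m p : MeshPattern} (hlen : m.len = p.len) (hperm : m.perm = p.perm)
    {j : ℕ} (hj : j ≤ m.len + 1) : valExt m p (eta1 m) j = j := by
  unfold valExt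
  split_ifs with h0 hle
  · omega
  · obtain ⟨hp1, hp2, hp3⟩ := pos_spec m (v := j) (by omega) hle
    simp only [eta1]
    rw [if_pos ⟨hp1, hp2⟩, ← hperm, hp3]
  · omega

lemma le_of_same {m p : MeshPattern} (h1 : m.len = p.len) (h2 : m.perm = p.perm)
    (h3 : m.sh ⊆ p.sh) : m ≤ p := by
  refine ⟨eta1 m, ?_, ?_, ?_, ?_, ?_, ?_⟩
  · intro i hi; simp only [eta1]; rw [if_neg (by omega)]
  · intro i hi1 hi2; simp only [eta1]; rw [if_pos ⟨hi1, hi2⟩]; omega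
  · intro i j hi hij hj; simp only [eta1]
    rw [if_pos ⟨hi, by omega⟩, if_pos ⟨by omega, hj⟩]; omega
  · intro i j hi1 hi2 hj1 hj2
    simp only [eta1]
    rw [if_pos ⟨hi1, hi2⟩, if_pos ⟨hj1, hj2⟩, h2]
  · rintro ⟨i, j⟩ hq y hy1 hy2 hint
    obtain ⟨hi, hj⟩ := m.sh_mem _ hq
    obtain ⟨c1, c2, _, _⟩ := hint
    rw [colExt_eta1 h1 (by omega)] at c1
    rw [colExt_eta1 h1 (by omega)] at c2
    omega
  · rintro ⟨i, j⟩ hq a b hr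
    obtain ⟨hi, hj⟩ := m.sh_mem _ hq
    obtain ⟨c1, c2, c3, c4⟩ := hr
    rw [colExt_eta1 h1 (by omega)] at c1
    rw [colExt_eta1 h1 (by omega)] at c2
    rw [valExt_eta1 h1 h2 (by omega)] at c3
    rw [valExt_eta1 h1 h2 (by omega)] at c4
    have hab : a = i ∧ b = j := by omega
    obtain ⟨rfl, rfl⟩ := hab
    exact h3 hq

lemma eta_ge {m p : MeshPattern} {η : ℕ → ℕ} (h : IsOcc m p η) :
    ∀ i, 1 ≤ i → i ≤ m.len → i ≤ η i := by
  intro i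
  induction i with
  | zero => omega
  | succ n ih =>
    intro _ hle
    rcases Nat.eq_zero_or_pos n with h1 | h1
    · have := (h.mem (n + 1) (by omega) hle).1; omega
    · have hn := ih (by omega) (by omega)
      have := h.mono n (n + 1) (by omega) (by omega) hle
      omega

lemma len_le_of_le {m p : MeshPattern} (h : m ≤ p) : m.len ≤ p.len := by
  obtain ⟨η, hocc⟩ := h
  rcases Nat.eq_zero_or_pos m.len with h0 | h0
  · omega
  · have h1 := eta_ge hocc m.len (by omega) le_rfl
    have h2 := (hocc.mem m.len (by omega) le_rfl).2
    omega

lemma eta_eq_id {m p : MeshPattern} {η : ℕ → ℕ} (hlen : m.len = p.len)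
    (h : IsOcc m p η) : η = eta1 m := by
  have hge := eta_ge h
  have hle : ∀ k i, 1 ≤ i → i ≤ m.len → m.len - i ≤ k → η i ≤ i := by
    intro k
    induction k with
    | zero =>
      intro i hi1 hi2 hk
      have hil : i = m.len := by omega
      have := (h.mem i hi1 hi2).2
      omega
    | succ n ih =>
      intro i hi1 hi2 hk
      rcases Nat.eq_or_lt_of_le hi2 with heq | hlt
      · have := (h.mem i hi1 hi2).2; omega
      · have h1 := ih (i + 1) (by omega) (by omega) (by omega)
        have h2 := h.mono i (i + 1) hi1 (by omega) (by omega)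
        omega
  funext i
  by_cases hi : 1 ≤ i ∧ i ≤ m.len
  · have hg := hge i hi.1 hi.2
    have hl := hle m.len i hi.1 hi.2 (by omega)
    simp only [eta1]; rw [if_pos hi]; omega
  · simp only [eta1]; rw [if_neg hi]
    exact h.zero i (by omega)

lemma perm_eq_card (m : MeshPattern) {i : ℕ} (h1 : 1 ≤ i) (h2 : i ≤ m.len) :
    m.perm i = ((Finset.Icc 1 m.len).filter (fun j => m.perm j ≤ m.perm i)).card := by
  classical
  have himg : ((Finset.Icc 1 m.len).filter (fun j => m.perm j ≤ m.perm i)).image m.perm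
      = Finset.Icc 1 (m.perm i) := by
    ext v
    simp only [Finset.mem_image, Finset.mem_filter, Finset.mem_Icc]
    constructor
    · rintro ⟨j, ⟨⟨hj1, hj2⟩, hle⟩, rfl⟩
      exact ⟨(m.perm_mem j hj1 hj2).1, hle⟩
    · rintro ⟨hv1, hv2⟩
      have hv2' : v ≤ m.len := le_trans hv2 (m.perm_mem i h1 h2).2
      obtain ⟨j, hj1, hj2, rfl⟩ := m.perm_surj v hv1 hv2'
      exact ⟨j, ⟨⟨hj1, hj2⟩, hv2⟩, rfl⟩
  have hinj : Set.InjOn m.perm ((Finset.Icc 1 m.len).filter (fun j => m.perm j ≤ m.perm i)) := by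
    intro x hx y hy hxy
    simp only [Finset.coe_filter, Set.mem_setOf_eq, Finset.mem_Icc] at hx hy
    exact m.perm_inj x y hx.1.1 hx.1.2 hy.1.1 hy.1.2 hxy
  have hcard := Finset.card_image_of_injOn hinj
  rw [himg, Nat.card_Icc] at hcard
  omega

lemma perm_eq_of_pattern {m p : MeshPattern} (hlen : m.len = p.len)
    (h : ∀ i j, 1 ≤ i → i ≤ m.len → 1 ≤ j → j ≤ m.len →
      (m.perm i < m.perm j ↔ p.perm i < p.perm j)) : m.perm = p.perm := by
  classical
  funext i
  by_cases hi : 1 ≤ i ∧ i ≤ m.len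
  · rw [perm_eq_card m hi.1 hi.2, perm_eq_card p (i := i) hi.1 (by omega)]
    rw [← hlen]
    congr 1
    apply Finset.filter_congr
    intro j hj
    simp only [Finset.mem_Icc] at hj
    simp only [← Nat.not_lt]
    exact not_congr (h i j hi.1 hi.2 hj.1 hj.2)
  · have hm := m.perm_zero i (by omega)
    have hp := p.perm_zero i (by omega)
    omega

lemma eq_of_le_facts {m p : MeshPattern} (h : m ≤ p) (hlen : m.len = p.len) :
    m.perm = p.perm ∧ m.sh ⊆ p.sh := by
  obtain ⟨η, hocc⟩ := h
  have hid := eta_eq_id hlen hocc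
  subst hid
  have hperm : m.perm = p.perm := by
    apply perm_eq_of_pattern hlen
    intro i j hi1 hi2 hj1 hj2
    have hpat := hocc.pattern i j hi1 hi2 hj1 hj2
    simp only [eta1] at hpat
    rw [if_pos ⟨hi1, hi2⟩, if_pos ⟨hj1, hj2⟩] at hpat
    exact hpat
  refine ⟨hperm, ?_⟩
  intro q hq
  obtain ⟨hi, hj⟩ := m.sh_mem q hq
  have hsh := hocc.shaded q hq q.1 q.2 ?_
  · simpa using hsh
  · refine ⟨?_, ?_, ?_, ?_⟩
    · rw [colExt_eta1 hlen (by omega)]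
    · rw [colExt_eta1 hlen (by omega)]; omega
    · rw [valExt_eta1 hlen hperm (by omega)]
    · rw [valExt_eta1 hlen hperm (by omega)]; omega

lemma interval_facts {p c : MeshPattern} {A : Finset (ℕ × ℕ)} (hA : A ⊆ p.sh)
    (h1 : reshade p A hA ≤ c) (h2 : c ≤ p) :
    ∃ hc : c.sh ⊆ p.sh, c.len = p.len ∧ c.perm = p.perm ∧ A ⊆ c.sh ∧
      c = reshade p c.sh hc := by
  have hl1 : p.len ≤ c.len := len_le_of_le (m := reshade p A hA) h1
  have hl2 : c.len ≤ p.len := len_le_of_le h2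
  have hlen : c.len = p.len := le_antisymm hl2 hl1
  obtain ⟨hperm, hsub⟩ := eq_of_le_facts h2 hlen
  obtain ⟨hperm', hsub'⟩ := eq_of_le_facts h1 hlen.symm
  exact ⟨hsub, hlen, hperm, hsub', ext' hlen hperm rfl⟩

open Classical in
lemma muFuel_reshade (p : MeshPattern) :
    ∀ fuel : ℕ, ∀ A S : Finset (ℕ × ℕ), ∀ (hA : A ⊆ p.sh) (hS : S ⊆ p.sh),
      A ⊆ S → S.card - A.card < fuel →
      muFuel (· ≤ ·) fuel (reshade p A hA) (reshade p S hS)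
        = (-1) ^ (S.card - A.card) := by
  intro fuel
  induction fuel with
  | zero => intro A S hA hS hAS hcard; omega
  | succ n ih =>
    intro A S hA hS hAS hcard
    by_cases hASe : A = S
    · subst hASe
      have heq : reshade p A hA = reshade p A hS := rfl
      rw [heq]
      have h1 : muFuel (· ≤ ·) (n + 1) (reshade p A hS) (reshade p A hS) = 1 := by
        simp [muFuel]
      rw [h1, Nat.sub_self, pow_zero]
    · have hne : reshade p A hA ≠ reshade p S hS := by
        intro h
        exact hASe (congrArg MeshPattern.sh h)
      have hle : reshade p A hA ≤ reshade p S hS := le_of_same rfl rfl hAS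
      set a := reshade p A hA with ha
      set b := reshade p S hS with hb
      have hbA : A ⊆ b.sh := hAS
      have hab : reshade b A hbA = a := ext' rfl rfl rfl
      set g : Finset (ℕ × ℕ) → MeshPattern :=
        fun S' => reshade p (S' ∩ p.sh) Finset.inter_subset_right with hgdef
      have hg : ∀ S' (h : S' ⊆ p.sh), g S' = reshade p S' h := by
        intro S' h
        exact ext' rfl rfl (Finset.inter_eq_left.mpr h)
      set F : Finset (Finset (ℕ × ℕ)) :=
        (S.powerset.filter (fun S' => A ⊆ S')).erase S with hF
      have hmemF : ∀ S', S' ∈ F ↔ S' ≠ S ∧ S' ⊆ S ∧ A ⊆ S' := by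
        intro S'
        simp [hF, Finset.mem_erase, Finset.mem_filter, Finset.mem_powerset, and_assoc]
      have hset : {c | a ≤ c ∧ c ≤ b ∧ c ≠ b} = ↑(F.image g) := by
        ext c
        simp only [Set.mem_setOf_eq, Finset.coe_image, Set.mem_image, Finset.mem_coe]
        constructor
        · rintro ⟨h1, h2, h3⟩
          obtain ⟨hc, hclen, hcperm, hAc, hce⟩ := interval_facts hbA (hab ▸ h1) h2
          have hcp : c.sh ⊆ p.sh := hc.trans hS
          refine ⟨c.sh, ?_, ?_⟩
          · rw [hmemF]
            refine ⟨?_, hc, hAc⟩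
            intro hcs
            exact h3 (ext' hclen hcperm hcs)
          · rw [hg c.sh hcp]
            exact ext' hclen.symm hcperm.symm rfl
        · rintro ⟨S', hS', rfl⟩
          rw [hmemF] at hS'
          obtain ⟨hne', hsub, hAs⟩ := hS'
          have hsubp : S' ⊆ p.sh := hsub.trans hS
          rw [hg S' hsubp]
          refine ⟨le_of_same rfl rfl hAs, le_of_same rfl rfl hsub, ?_⟩
          intro h
          exact hne' (congrArg MeshPattern.sh h)
      have hinj : ∀ x ∈ F, ∀ y ∈ F, g x = g y → x = y := by
        intro x hx y hy hxy
        rw [hmemF] at hx hy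
        have h1 := congrArg MeshPattern.sh hxy
        simp only [hgdef, reshade] at h1
        rwa [Finset.inter_eq_left.mpr (hx.2.1.trans hS),
          Finset.inter_eq_left.mpr (hy.2.1.trans hS)] at h1
      rw [muFuel, if_neg hne, if_pos hle, hset, finsum_mem_coe_finset,
        Finset.sum_image hinj]
      have hterm : ∀ S' ∈ F, muFuel (· ≤ ·) n a (g S') = (-1) ^ (S'.card - A.card) := by
        intro S' hS'
        rw [hmemF] at hS'
        obtain ⟨hne', hsub, hAs⟩ := hS'
        have hsubp : S' ⊆ p.sh := hsub.trans hS
        rw [hg S' hsubp]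
        apply ih A S' hA hsubp hAs
        have h1 : S'.card < S.card := Finset.card_lt_card (ssubset_of_ne_of_subset hne' hsub)
        have h2 : A.card ≤ S'.card := Finset.card_le_card hAs
        have h3 : A.card ≤ S.card := Finset.card_le_card hAS
        omega
      rw [Finset.sum_congr rfl hterm]
      have hSF : S ∉ F := by simp [hF]
      have hSG : S ∈ S.powerset.filter (fun S' => A ⊆ S') := by
        simp [Finset.mem_filter, Finset.mem_powerset, hAS]
      have key : ∑ S' ∈ S.powerset.filter (fun S' => A ⊆ S'),
          (-1 : ℤ) ^ (S'.card - A.card) = 0 := by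
        have hbij : ∑ S' ∈ S.powerset.filter (fun S' => A ⊆ S'),
            (-1 : ℤ) ^ (S'.card - A.card)
            = ∑ t ∈ (S \ A).powerset, (-1 : ℤ) ^ t.card := by
          apply Finset.sum_bij' (fun S' _ => S' \ A) (fun t _ => A ∪ t)
          · intro S' hS'
            simp only [Finset.mem_filter, Finset.mem_powerset] at hS'
            simp only [Finset.mem_powerset]
            exact Finset.sdiff_subset_sdiff hS'.1 le_rfl
          · intro t ht
            simp only [Finset.mem_powerset] at ht
            simp only [Finset.mem_filter, Finset.mem_powerset]
            refine ⟨Finset.union_subset hAS (ht.trans Finset.sdiff_subset), Finset.subset_union_left⟩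
          · intro S' hS'
            simp only [Finset.mem_filter, Finset.mem_powerset] at hS'
            exact Finset.union_sdiff_of_subset hS'.2
          · intro t ht
            simp only [Finset.mem_powerset] at ht
            have hdisj : Disjoint A t :=
              Finset.disjoint_left.mpr fun x hxA hxt => (Finset.mem_sdiff.mp (ht hxt)).2 hxA
            exact Finset.union_sdiff_cancel_left hdisj
          · intro S' hS'
            simp only [Finset.mem_filter, Finset.mem_powerset] at hS'
            rw [Finset.card_sdiff_of_subset hS'.2]
        rw [hbij]
        apply Finset.sum_powerset_neg_one_pow_card_of_nonempty
        rw [Finset.sdiff_nonempty]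
        intro hSA
        exact hASe (Finset.Subset.antisymm hAS hSA)
      have hsplit := Finset.sum_erase_add (S.powerset.filter (fun S' => A ⊆ S'))
        (fun S' => (-1 : ℤ) ^ (S'.card - A.card)) hSG
      rw [key] at hsplit
      have hsum : ∑ S' ∈ F, (-1 : ℤ) ^ (S'.card - A.card)
          = -(-1 : ℤ) ^ (S.card - A.card) := by
        rw [hF]
        linarith [hsplit]
      rw [hsum]
      ring

/-- The interval `[π^A, π^B]` (here `B = sh p` and `π^B = p`) is isomorphic to the
boolean lattice of subsets of a set of size `|B| - |A|`, and consequently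
`μ(π^A, π^B) = (-1) ^ (|B| - |A|)`. -/
theorem interval_same_perm_boolean (p : MeshPattern) (A : Finset (ℕ × ℕ)) (hA : A ⊆ p.sh) :
    Nonempty ({c : MeshPattern // p.reshade A hA ≤ c ∧ c ≤ p} ≃o
      Finset (Fin (p.sh.card - A.card))) ∧
    mu (p.reshade A hA) p = (-1) ^ (p.sh.card - A.card) := by
  classical
  constructor
  · -- the order isomorphism
    set d : Finset (ℕ × ℕ) := p.sh \ A with hd
    have hdcard : d.card = p.sh.card - A.card := Finset.card_sdiff_of_subset hA
    set e : {x // x ∈ d} ≃ Fin (p.sh.card - A.card) :=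
      d.equivFin.trans (finCongr hdcard) with he
    have hint : ∀ c : {c : MeshPattern // p.reshade A hA ≤ c ∧ c ≤ p},
        ∃ hc : c.1.sh ⊆ p.sh, c.1.len = p.len ∧ c.1.perm = p.perm ∧ A ⊆ c.1.sh ∧
          c.1 = reshade p c.1.sh hc := fun c => interval_facts hA c.2.1 c.2.2
    set f : {c : MeshPattern // p.reshade A hA ≤ c ∧ c ≤ p} →
        Finset (Fin (p.sh.card - A.card)) :=
      fun c => Finset.univ.filter
        (fun i => ((e.symm i : {x // x ∈ d}) : ℕ × ℕ) ∈ c.1.sh) with hf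
    have hginv : ∀ T : Finset (Fin (p.sh.card - A.card)),
        A ∪ T.image (fun i => ((e.symm i : {x // x ∈ d}) : ℕ × ℕ)) ⊆ p.sh := by
      intro T x hx
      rcases Finset.mem_union.mp hx with h | h
      · exact hA h
      · obtain ⟨i, _, rfl⟩ := Finset.mem_image.mp h
        exact (Finset.mem_sdiff.mp (e.symm i).2).1
    set g : Finset (Fin (p.sh.card - A.card)) →
        {c : MeshPattern // p.reshade A hA ≤ c ∧ c ≤ p} :=
      fun T => ⟨reshade p (A ∪ T.image (fun i => ((e.symm i : {x // x ∈ d}) : ℕ × ℕ)))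
          (hginv T),
        le_of_same rfl rfl Finset.subset_union_left,
        le_of_same rfl rfl (hginv T)⟩ with hg
    refine ⟨⟨⟨f, g, ?_, ?_⟩, ?_⟩⟩
    · -- left inverse
      intro c
      obtain ⟨hc, hclen, hcperm, hAc, hce⟩ := hint c
      apply Subtype.ext
      simp only [hg]
      apply ext'
      · exact hclen.symm
      · exact hcperm.symm
      simp only [reshade]
      ext x
      simp only [hf, Finset.mem_union, Finset.mem_image, Finset.mem_filter,
        Finset.mem_univ, true_and]
      constructor
      · rintro (h | ⟨i, hi, rfl⟩)
        · exact hAc h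
        · exact hi
      · intro hx
        by_cases hxA : x ∈ A
        · exact Or.inl hxA
        · right
          have hxd : x ∈ d := Finset.mem_sdiff.mpr ⟨hc hx, hxA⟩
          refine ⟨e ⟨x, hxd⟩, ?_, ?_⟩
          · rw [Equiv.symm_apply_apply]; exact hx
          · rw [Equiv.symm_apply_apply]
    · -- right inverse
      intro T
      show Finset.univ.filter _ = T
      ext i
      simp only [hf, hg, Finset.mem_filter, Finset.mem_univ, true_and, reshade]
      constructor
      · intro h
        rcases Finset.mem_union.mp h with h' | h'
        · exact absurd h' (Finset.mem_sdiff.mp (e.symm i).2).2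
        · obtain ⟨j, hj, hji⟩ := Finset.mem_image.mp h'
          have h1 : e.symm j = e.symm i := Subtype.coe_injective hji
          have h2 : j = i := e.symm.injective h1
          rwa [← h2]
      · intro h
        exact Finset.mem_union_right _ (Finset.mem_image.mpr ⟨i, h, rfl⟩)
    · -- map_rel_iff
      intro c c'
      obtain ⟨hc, hclen, hcperm, hAc, _⟩ := hint c
      obtain ⟨hc', hclen', hcperm', hAc', _⟩ := hint c'
      show f c ⊆ f c' ↔ c.1 ≤ c'.1
      constructor
      · intro h
        apply le_of_same (by omega) (hcperm.trans hcperm'.symm)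
        intro x hx
        by_cases hxA : x ∈ A
        · exact hAc' hxA
        · have hxd : x ∈ d := Finset.mem_sdiff.mpr ⟨hc hx, hxA⟩
          have hmem : e ⟨x, hxd⟩ ∈ f c := by
            simp only [hf, Finset.mem_filter, Finset.mem_univ, true_and,
              Equiv.symm_apply_apply]
            exact hx
          have hmem' := h hmem
          simp only [hf, Finset.mem_filter, Finset.mem_univ, true_and,
            Equiv.symm_apply_apply] at hmem'
          exact hmem'
      · intro h i hi
        have hsub := (eq_of_le_facts h (by omega)).2
        simp only [hf, Finset.mem_filter, Finset.mem_univ, true_and] at hi ⊢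
        exact hsub hi
  · -- the Möbius function value
    have hpe : reshade p p.sh (fun _ h => h) = p := ext' rfl rfl rfl
    have hdim : p.sh.card - A.card < p.dim + 1 := by
      have hdd : p.dim = p.len + p.sh.card := rfl
      omega
    have hmu := muFuel_reshade p (p.dim + 1) A p.sh hA (fun _ h => h) hA hdim
    calc mu (p.reshade A hA) p
        = muFuel (· ≤ ·) (p.dim + 1) (p.reshade A hA)
            (reshade p p.sh (fun _ h => h)) := by rw [hpe]; rfl
      _ = (-1) ^ (p.sh.card - A.card) := hmu

end MeshPattern
end

section
/- For any permutations σ and π with σ ≤ π in the classical permutation pattern poset 𝓟, the interval [σ^∅, π^∅] in the mesh pattern poset 𝓜 is isomorphic as a poset to the interval [σ, π] in 𝓟; consequently μ_𝓜(σ^∅, π^∅) = μ_𝓟(σ, π). -/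
namespace MeshPattern

lemma colExt_strict {m p : MeshPattern} {η : ℕ → ℕ} (hη : IsOcc m p η) {i : ℕ}
    (hi : i ≤ m.len) : colExt m p η i < colExt m p η (i + 1) := by
  unfold colExt
  rcases Nat.eq_zero_or_pos i with h0 | h0
  · subst h0
    simp only [Nat.zero_add, if_pos rfl, if_true]
    by_cases h1 : 1 ≤ m.len
    · have := hη.mem 1 le_rfl h1
      rw [if_neg one_ne_zero, if_pos h1]; omega
    · rw [if_neg one_ne_zero, if_neg h1]; omega
  · have hi0 : i ≠ 0 := by omega
    rw [if_neg hi0, if_pos hi, if_neg (by omega : i + 1 ≠ 0)]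
    by_cases h2 : i + 1 ≤ m.len
    · rw [if_pos h2]
      exact hη.mono i (i + 1) h0 (by omega) h2
    · rw [if_neg h2]
      have := hη.mem i h0 hi
      omega

lemma valExt_strict {m p : MeshPattern} {η : ℕ → ℕ} (hη : IsOcc m p η) {j : ℕ}
    (hj : j ≤ m.len) : valExt m p η j < valExt m p η (j + 1) := by
  unfold valExt
  rcases Nat.eq_zero_or_pos j with h0 | h0
  · subst h0
    simp only [Nat.zero_add, if_pos rfl, if_true]
    by_cases h1 : 1 ≤ m.len
    · obtain ⟨hp1, hp2, _⟩ := m.pos_spec le_rfl h1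
      have hmem := hη.mem _ hp1 hp2
      have := p.perm_mem _ hmem.1 hmem.2
      rw [if_neg one_ne_zero, if_pos h1]; omega
    · rw [if_neg one_ne_zero, if_neg h1]; omega
  · have hj0 : j ≠ 0 := by omega
    rw [if_neg hj0, if_pos hj, if_neg (by omega : j + 1 ≠ 0)]
    by_cases h2 : j + 1 ≤ m.len
    · rw [if_pos h2]
      obtain ⟨ha1, ha2, ha3⟩ := m.pos_spec h0 hj
      obtain ⟨hb1, hb2, hb3⟩ := m.pos_spec (by omega : 1 ≤ j + 1) h2
      have := (hη.pattern _ _ ha1 ha2 hb1 hb2).1 (by omega)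
      exact this
    · rw [if_neg h2]
      obtain ⟨ha1, ha2, _⟩ := m.pos_spec h0 hj
      have hmem := hη.mem _ ha1 ha2
      have := p.perm_mem _ hmem.1 hmem.2
      omega

/-- A mesh pattern occurring in an unshaded mesh pattern is unshaded. -/
lemma sh_empty_of_le {c p : MeshPattern} (h : c ≤ p) (hp : p.sh = ∅) : c.sh = ∅ := by
  obtain ⟨η, hη⟩ := h
  by_contra hne
  obtain ⟨⟨i, j⟩, hij⟩ := Finset.nonempty_iff_ne_empty.2 hne
  have hbd := c.sh_mem _ hij
  have hcol := colExt_strict hη (i := i) hbd.1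
  have hval := valExt_strict hη (j := j) hbd.2
  have : (colExt c p η i, valExt c p η j) ∈ p.sh :=
    hη.shaded _ hij _ _ ⟨le_rfl, hcol, le_rfl, hval⟩
  rw [hp] at this
  exact absurd this (Finset.notMem_empty _)

lemma muFuel_subtype (n : ℕ) (σ τ : {m : MeshPattern // m.sh = ∅}) :
    muFuel (· ≤ ·) n σ.1 τ.1 = muFuel (α := {m : MeshPattern // m.sh = ∅}) (· ≤ ·) n σ τ := by
  induction n generalizing τ with
  | zero =>
    simp only [muFuel]
    by_cases hh : σ = τ
    · rw [if_pos (congrArg Subtype.val hh), if_pos hh]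
    · rw [if_neg (fun hhh => hh (Subtype.ext hhh)), if_neg hh]
  | succ n ih =>
    simp only [muFuel]
    by_cases he : σ = τ
    · rw [if_pos he, if_pos (by rw [he])]
    · rw [if_neg he, if_neg (fun hh => he (Subtype.ext hh))]
      by_cases hle : σ ≤ τ
      · rw [if_pos (show (↑σ : MeshPattern) ≤ ↑τ from hle), if_pos hle]
        congr 1
        have hset : {c : MeshPattern | σ.1 ≤ c ∧ c ≤ τ.1 ∧ c ≠ τ.1} =
            Subtype.val '' {c : {m : MeshPattern // m.sh = ∅} | σ ≤ c ∧ c ≤ τ ∧ c ≠ τ} := by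
          ext c
          constructor
          · rintro ⟨h1, h2, h3⟩
            exact ⟨⟨c, sh_empty_of_le h2 τ.2⟩, ⟨h1, h2, fun hh => h3 (congrArg Subtype.val hh)⟩,
              rfl⟩
          · rintro ⟨d, ⟨h1, h2, h3⟩, rfl⟩
            exact ⟨h1, h2, fun hh => h3 (Subtype.ext hh)⟩
        rw [hset, finsum_mem_image (Subtype.val_injective.injOn)]
        exact finsum_mem_congr rfl fun d _ => ih d
      · rw [if_neg (show ¬ (↑σ : MeshPattern) ≤ ↑τ from hle), if_neg hle]

/-- For permutations `σ ≤ π` (elements of the classical permutation poset `𝓟`, realised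
as unshaded mesh patterns), the interval `[σ^∅, π^∅]` of the mesh pattern poset `𝓜` is
isomorphic to the interval `[σ, π]` of `𝓟`, and the Möbius functions agree. -/
theorem interval_unshaded_iso_perm_poset (σ π : {m : MeshPattern // m.sh = ∅})
    (h : σ ≤ π) :
    Nonempty ({c : MeshPattern // σ.1 ≤ c ∧ c ≤ π.1} ≃o
      {c : {m : MeshPattern // m.sh = ∅} // σ ≤ c ∧ c ≤ π}) ∧
    mu σ.1 π.1 = muP σ π := by
  constructor
  · exact ⟨⟨⟨fun c => ⟨⟨c.1, sh_empty_of_le c.2.2 π.2⟩, c.2.1, c.2.2⟩,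
      fun c => ⟨c.1.1, c.2.1, c.2.2⟩, fun c => rfl, fun c => Subtype.ext (Subtype.ext rfl)⟩,
      Iff.rfl⟩⟩
  · have hdim : π.1.dim = π.1.len := by
      unfold dim; rw [π.2]; simp
    unfold mu muP
    rw [hdim]
    exact muFuel_subtype _ σ π

end MeshPattern
end

section
/- The Möbius function is unbounded on the mesh pattern poset 𝓜: for every natural number N there exist mesh patterns m ≤ p with |μ(m, p)| > N. -/
namespace MeshPattern
set_option linter.dupNamespace false

lemma pos_spec_s4 (c : MeshPattern) {v : ℕ} (h1 : 1 ≤ v) (h2 : v ≤ c.len) :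
    1 ≤ c.pos v ∧ c.pos v ≤ c.len ∧ c.perm (c.pos v) = v := by
  obtain ⟨i, hi1, hi2, hi3⟩ := c.perm_surj v h1 h2
  have heq : c.perm (c.pos v) = v := Function.invFun_eq ⟨i, hi3⟩
  refine ⟨?_, ?_, heq⟩
  · by_contra h
    have := c.perm_zero (c.pos v) (by omega)
    omega
  · by_contra h
    have := c.perm_zero (c.pos v) (by omega)
    omega

lemma IsOcc.incr {c p : MeshPattern} {η : ℕ → ℕ} (occ : IsOcc c p η)
    {i j : ℕ} (h1 : 1 ≤ i) (h2 : i ≤ j) (h3 : j ≤ c.len) : η i + (j - i) ≤ η j := by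
  induction j, h2 using Nat.le_induction with
  | base => omega
  | succ n hn ih =>
    have h4 := occ.mono n (n+1) (by omega) (by omega) (by omega)
    have h5 := ih (by omega)
    omega

lemma IsOcc.len_le' {c p : MeshPattern} {η : ℕ → ℕ} (occ : IsOcc c p η) :
    c.len ≤ p.len := by
  rcases Nat.eq_zero_or_pos c.len with h | h
  · omega
  · have h1 := occ.incr (i := 1) (j := c.len) le_rfl h le_rfl
    have h2 := occ.mem 1 le_rfl h
    have h3 := occ.mem c.len h le_rfl
    omega

lemma IsOcc.colExt_lt {c p : MeshPattern} {η : ℕ → ℕ} (occ : IsOcc c p η)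
    {i : ℕ} (hi : i ≤ c.len) : colExt c p η i < colExt c p η (i + 1) := by
  unfold colExt
  rcases Nat.eq_zero_or_pos i with rfl | hpos
  · rw [if_pos rfl, if_neg (by omega)]
    by_cases h : 0 + 1 ≤ c.len
    · rw [if_pos h]
      exact (occ.mem 1 le_rfl (by omega)).1
    · rw [if_neg h]; omega
  · rw [if_neg (by omega), if_pos hi, if_neg (by omega)]
    by_cases h : i + 1 ≤ c.len
    · rw [if_pos h]
      exact occ.mono i (i+1) hpos (by omega) h
    · rw [if_neg h]
      have := (occ.mem i hpos hi).2
      omega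

lemma IsOcc.valExt_lt {c p : MeshPattern} {η : ℕ → ℕ} (occ : IsOcc c p η)
    {j : ℕ} (hj : j ≤ c.len) : valExt c p η j < valExt c p η (j + 1) := by
  unfold valExt
  have key : ∀ v, 1 ≤ v → v ≤ c.len →
      1 ≤ p.perm (η (c.pos v)) ∧ p.perm (η (c.pos v)) ≤ p.len := by
    intro v hv1 hv2
    obtain ⟨hp1, hp2, _⟩ := pos_spec_s4 c hv1 hv2
    have hm := occ.mem _ hp1 hp2
    exact p.perm_mem _ hm.1 hm.2
  rcases Nat.eq_zero_or_pos j with rfl | hpos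
  · rw [if_pos rfl, if_neg (by omega)]
    by_cases h : 0 + 1 ≤ c.len
    · rw [if_pos h]
      exact (key 1 le_rfl (by omega)).1
    · rw [if_neg h]; omega
  · rw [if_neg (by omega), if_pos hj, if_neg (by omega)]
    by_cases h : j + 1 ≤ c.len
    · rw [if_pos h]
      obtain ⟨hp1, hp2, hp3⟩ := pos_spec_s4 c (v := j) hpos hj
      obtain ⟨hq1, hq2, hq3⟩ := pos_spec_s4 c (v := j+1) (by omega) h
      exact (occ.pattern _ _ hp1 hp2 hq1 hq2).1 (by omega)
    · rw [if_neg h]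
      have := (key j hpos hj).2
      omega

lemma IsOcc.sh_empty {c p : MeshPattern} {η : ℕ → ℕ} (occ : IsOcc c p η)
    (hp : p.sh = ∅) : c.sh = ∅ := by
  rcases Finset.eq_empty_or_nonempty c.sh with h | ⟨⟨i, j⟩, hq⟩
  · exact h
  exfalso
  obtain ⟨hi, hj⟩ := c.sh_mem _ hq
  have hmem := occ.shaded _ hq (colExt c p η i) (valExt c p η j)
    ⟨le_rfl, occ.colExt_lt hi, le_rfl, occ.valExt_lt hj⟩
  rw [hp] at hmem
  simp at hmem
lemma card_lt_filter (c : MeshPattern) {i : ℕ} (h1 : 1 ≤ i) (h2 : i ≤ c.len) :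
    ((Finset.Icc 1 c.len).filter (fun j => c.perm j < c.perm i)).card = c.perm i - 1 := by
  have hmi := c.perm_mem i h1 h2
  have : ((Finset.Icc 1 (c.perm i - 1))).card = c.perm i - 1 := by
    rw [Nat.card_Icc]; omega
  rw [← this]
  apply Finset.card_bij (fun j _ => c.perm j)
  · intro a ha
    simp only [Finset.mem_filter, Finset.mem_Icc] at ha ⊢
    have := c.perm_mem a ha.1.1 ha.1.2
    omega
  · intro a ha b hb hab
    simp only [Finset.mem_filter, Finset.mem_Icc] at ha hb
    exact c.perm_inj a b ha.1.1 ha.1.2 hb.1.1 hb.1.2 hab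
  · intro v hv
    simp only [Finset.mem_Icc] at hv
    obtain ⟨j, hj1, hj2, hj3⟩ := c.perm_surj v hv.1 (by omega)
    exact ⟨j, by simp only [Finset.mem_filter, Finset.mem_Icc]; omega, hj3⟩

lemma perm_eq_of_iso (c d : MeshPattern) (hlen : c.len = d.len)
    (h : ∀ i j, 1 ≤ i → i ≤ c.len → 1 ≤ j → j ≤ c.len →
      (c.perm i < c.perm j ↔ d.perm i < d.perm j)) : c.perm = d.perm := by
  funext i
  by_cases hi : 1 ≤ i ∧ i ≤ c.len
  · have hc := card_lt_filter c hi.1 hi.2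
    have hd := card_lt_filter d (i := i) hi.1 (by omega)
    have hfil : ((Finset.Icc 1 c.len).filter (fun j => c.perm j < c.perm i)) =
        ((Finset.Icc 1 d.len).filter (fun j => d.perm j < d.perm i)) := by
      rw [← hlen]
      apply Finset.filter_congr
      intro j hj
      simp only [Finset.mem_Icc] at hj
      exact h j i hj.1 hj.2 hi.1 hi.2
    rw [hfil, hd] at hc
    have := c.perm_mem i hi.1 hi.2
    have := d.perm_mem i hi.1 (by omega)
    omega
  · rw [c.perm_zero i (by omega), d.perm_zero i (by omega)]

/-- The identity occurrence of `m` in itself. -/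
lemma isOcc_id (m : MeshPattern) :
    IsOcc m m (fun i => if 1 ≤ i ∧ i ≤ m.len then i else 0) := by
  constructor
  · intro i h; rw [if_neg (by omega)]
  · intro i h1 h2; rw [if_pos ⟨h1, h2⟩]; omega
  · intro i j h1 h2 h3
    rw [if_pos ⟨h1, by omega⟩, if_pos ⟨by omega, h3⟩]; omega
  · intro i j h1 h2 h3 h4
    rw [if_pos ⟨h1, h2⟩, if_pos ⟨h3, h4⟩]
  · rintro ⟨i, j⟩ hq y hy1 hy2 hIP
    obtain ⟨hi, hj⟩ := m.sh_mem _ hq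
    obtain ⟨c1, c2, v1, v2⟩ := hIP
    unfold colExt at c1 c2
    simp only at c1 c2
    rcases Nat.eq_zero_or_pos i with rfl | hpos
    · rw [if_pos rfl] at c1
      rw [if_neg (by omega)] at c2
      by_cases h : 0 + 1 ≤ m.len
      · rw [if_pos h, if_pos ⟨le_rfl, h⟩] at c2; omega
      · omega
    · rw [if_neg (by omega), if_pos hi, if_pos ⟨hpos, hi⟩] at c1
      rw [if_neg (by omega)] at c2
      by_cases h : i + 1 ≤ m.len
      · rw [if_pos h, if_pos ⟨by omega, h⟩] at c2; omega
      · rw [if_neg h] at c2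
        have := m.perm_mem y hy1 hy2
        -- y ≤ m.len but c1 : i < y and ¬ i+1 ≤ len → i = len, y > len contradiction
        omega
  · rintro ⟨i, j⟩ hq a b hab
    obtain ⟨hi, hj⟩ := m.sh_mem _ hq
    obtain ⟨c1, c2, v1, v2⟩ := hab
    have ha : a = i := by
      unfold colExt at c1 c2
      simp only at c1 c2
      rcases Nat.eq_zero_or_pos i with rfl | hpos
      · rw [if_pos rfl] at c1
        rw [if_neg (by omega)] at c2
        by_cases h : 0 + 1 ≤ m.len
        · rw [if_pos h, if_pos ⟨le_rfl, h⟩] at c2; omega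
        · rw [if_neg h] at c2; omega
      · rw [if_neg (by omega), if_pos hi, if_pos ⟨hpos, hi⟩] at c1
        rw [if_neg (by omega)] at c2
        by_cases h : i + 1 ≤ m.len
        · rw [if_pos h, if_pos ⟨by omega, h⟩] at c2; omega
        · rw [if_neg h] at c2; omega
    have hval : ∀ v, 1 ≤ v → v ≤ m.len →
        m.perm ((fun i => if 1 ≤ i ∧ i ≤ m.len then i else 0) (m.pos v)) = v := by
      intro v hv1 hv2
      obtain ⟨hp1, hp2, hp3⟩ := pos_spec_s4 m hv1 hv2
      show m.perm (if 1 ≤ m.pos v ∧ m.pos v ≤ m.len then m.pos v else 0) = v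
      rw [if_pos (show 1 ≤ m.pos v ∧ m.pos v ≤ m.len from ⟨hp1, hp2⟩)]
      exact hp3
    have hb : b = j := by
      unfold valExt at v1 v2
      simp only at v1 v2
      rcases Nat.eq_zero_or_pos j with rfl | hpos
      · rw [if_pos rfl] at v1
        rw [if_neg (by omega)] at v2
        by_cases h : 0 + 1 ≤ m.len
        · rw [if_pos h, hval 1 le_rfl h] at v2; omega
        · rw [if_neg h] at v2; omega
      · rw [if_neg (by omega), if_pos hj, hval j hpos hj] at v1
        rw [if_neg (by omega)] at v2
        by_cases h : j + 1 ≤ m.len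
        · rw [if_pos h, hval (j+1) (by omega) h] at v2; omega
        · rw [if_neg h] at v2; omega
    subst ha; subst hb; exact hq

lemma le_refl' (m : MeshPattern) : m ≤ m := ⟨_, isOcc_id m⟩
lemma eq_of_le_same_len {c d : MeshPattern} (h : c ≤ d) (hlen : c.len = d.len)
    (hd : d.sh = ∅) : c = d := by
  obtain ⟨η, occ⟩ := h
  have hid : ∀ i, 1 ≤ i → i ≤ c.len → η i = i := by
    intro i h1 h2
    have hlow : i ≤ η i := by
      have := occ.incr (i := 1) (j := i) le_rfl h1 h2
      have := (occ.mem 1 le_rfl (by omega)).1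
      omega
    have hhigh : η i ≤ i := by
      have := occ.incr (i := i) (j := c.len) h1 h2 le_rfl
      have := (occ.mem c.len (by omega) le_rfl).2
      omega
    omega
  refine ext' hlen ?_ (by rw [occ.sh_empty hd, hd])
  apply perm_eq_of_iso c d hlen
  intro i j h1 h2 h3 h4
  have := occ.pattern i j h1 h2 h3 h4
  rwa [hid i h1 h2, hid j h3 h4] at this

lemma collapse_lt {u v t : ℕ} (hu : u ≠ t) (hv : v ≠ t) (hu1 : 1 ≤ u) (hv1 : 1 ≤ v) :
    ((if u < t then u else u - 1) < (if v < t then v else v - 1)) ↔ u < v := by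
  split_ifs <;> omega

lemma etaDel_eval (p : MeshPattern) (x i : ℕ) (h1 : 1 ≤ i) (h2 : i ≤ p.len - 1) :
    etaDel p x i = if i < x then i else i + 1 := by
  unfold etaDel; rw [if_pos ⟨h1, h2⟩]

lemma etaDel_zero (p : MeshPattern) (x i : ℕ) (h : ¬ (1 ≤ i ∧ i ≤ p.len - 1)) :
    etaDel p x i = 0 := by
  unfold etaDel; rw [if_neg h]

lemma etaDel_mem (p : MeshPattern) {x i : ℕ} (hx1 : 1 ≤ x) (hx2 : x ≤ p.len)
    (h1 : 1 ≤ i) (h2 : i ≤ p.len - 1) :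
    1 ≤ etaDel p x i ∧ etaDel p x i ≤ p.len ∧ etaDel p x i ≠ x := by
  rw [etaDel_eval p x i h1 h2]; split_ifs <;> omega

lemma delPerm_eval (p : MeshPattern) (x i : ℕ) (h1 : 1 ≤ i) (h2 : i ≤ p.len - 1) :
    delPerm p x i = if p.perm (etaDel p x i) < p.perm x then p.perm (etaDel p x i)
      else p.perm (etaDel p x i) - 1 := by
  unfold delPerm; rw [if_pos ⟨h1, h2⟩]

lemma delPerm_zero (p : MeshPattern) (x i : ℕ) (h : ¬ (1 ≤ i ∧ i ≤ p.len - 1)) :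
    delPerm p x i = 0 := by
  unfold delPerm; rw [if_neg h]

lemma perm_ne_of_ne (p : MeshPattern) {a b : ℕ} (ha1 : 1 ≤ a) (ha2 : a ≤ p.len)
    (hb1 : 1 ≤ b) (hb2 : b ≤ p.len) (hne : a ≠ b) : p.perm a ≠ p.perm b :=
  fun hc => hne (p.perm_inj a b ha1 ha2 hb1 hb2 hc)

/-- The deletion of the point at position `x` from `p`, as a mesh pattern with no
shaded boxes. -/
def delAtAux (p : MeshPattern) (x : ℕ) (hx1 : 1 ≤ x) (hx2 : x ≤ p.len) : MeshPattern where
  len := p.len - 1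
  perm := delPerm p x
  sh := ∅
  perm_mem := by
    intro i h1 h2
    rw [delPerm_eval p x i h1 h2]
    obtain ⟨he1, he2, he3⟩ := etaDel_mem p hx1 hx2 h1 h2
    have hu := p.perm_mem _ he1 he2
    have ht := p.perm_mem x hx1 hx2
    have hne := perm_ne_of_ne p he1 he2 hx1 hx2 he3
    split_ifs <;> omega
  perm_zero := by
    intro i h
    exact delPerm_zero p x i (by omega)
  perm_inj := by
    intro i j h1 h2 h3 h4 h
    rw [delPerm_eval p x i h1 h2, delPerm_eval p x j h3 h4] at h
    obtain ⟨hi1, hi2, hi3⟩ := etaDel_mem p hx1 hx2 h1 h2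
    obtain ⟨hj1, hj2, hj3⟩ := etaDel_mem p hx1 hx2 h3 h4
    have hu := p.perm_mem _ hi1 hi2
    have hv := p.perm_mem _ hj1 hj2
    have hne1 := perm_ne_of_ne p hi1 hi2 hx1 hx2 hi3
    have hne2 := perm_ne_of_ne p hj1 hj2 hx1 hx2 hj3
    have hee : p.perm (etaDel p x i) = p.perm (etaDel p x j) := by
      revert h; split_ifs <;> omega
    have := p.perm_inj _ _ hi1 hi2 hj1 hj2 hee
    rw [etaDel_eval p x i h1 h2, etaDel_eval p x j h3 h4] at this
    revert this; split_ifs <;> omega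
  perm_surj := by
    intro v h1 h2
    have ht := p.perm_mem x hx1 hx2
    have hu : 1 ≤ (if v < p.perm x then v else v + 1) ∧
        (if v < p.perm x then v else v + 1) ≤ p.len ∧
        (if v < p.perm x then v else v + 1) ≠ p.perm x := by split_ifs <;> omega
    obtain ⟨i, hi1, hi2, hi3⟩ := p.perm_surj _ hu.1 hu.2.1
    have hix : i ≠ x := fun hc => hu.2.2 (by rw [← hi3, hc])
    have hb1 : 1 ≤ (if i < x then i else i - 1) := by split_ifs <;> omega
    have hb2 : (if i < x then i else i - 1) ≤ p.len - 1 := by split_ifs <;> omega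
    refine ⟨if i < x then i else i - 1, hb1, hb2, ?_⟩
    rw [delPerm_eval p x _ hb1 hb2, etaDel_eval p x _ hb1 hb2]
    have heq : (if (if i < x then i else i - 1) < x then (if i < x then i else i - 1)
        else (if i < x then i else i - 1) + 1) = i := by split_ifs <;> omega
    rw [heq, hi3]
    split_ifs <;> omega
  sh_mem := by simp

@[simp] lemma delAtAux_len (p : MeshPattern) (x : ℕ) (h1 : 1 ≤ x) (h2 : x ≤ p.len) :
    (delAtAux p x h1 h2).len = p.len - 1 := rfl
@[simp] lemma delAtAux_perm (p : MeshPattern) (x : ℕ) (h1 : 1 ≤ x) (h2 : x ≤ p.len) :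
    (delAtAux p x h1 h2).perm = delPerm p x := rfl
@[simp] lemma delAtAux_sh (p : MeshPattern) (x : ℕ) (h1 : 1 ≤ x) (h2 : x ≤ p.len) :
    (delAtAux p x h1 h2).sh = ∅ := rfl

lemma delAtAux_le (p : MeshPattern) (x : ℕ) (h1 : 1 ≤ x) (h2 : x ≤ p.len) :
    delAtAux p x h1 h2 ≤ p := by
  refine ⟨etaDel p x, ?_⟩
  constructor
  · intro i h
    exact etaDel_zero p x i (by simp only [delAtAux_len] at h; omega)
  · intro i hi1 hi2
    simp only [delAtAux_len] at hi2
    rw [etaDel_eval p x i hi1 hi2]; split_ifs <;> omega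
  · intro i j hi1 hij hj
    simp only [delAtAux_len] at hj
    rw [etaDel_eval p x i hi1 (by omega), etaDel_eval p x j (by omega) hj]
    split_ifs <;> omega
  · intro i j hi1 hi2 hj1 hj2
    simp only [delAtAux_len] at hi2 hj2
    simp only [delAtAux_perm]
    rw [delPerm_eval p x i hi1 hi2, delPerm_eval p x j hj1 hj2]
    obtain ⟨ha1, ha2, ha3⟩ := etaDel_mem p h1 h2 hi1 hi2
    obtain ⟨hb1, hb2, hb3⟩ := etaDel_mem p h1 h2 hj1 hj2
    have hu := p.perm_mem _ ha1 ha2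
    have hv := p.perm_mem _ hb1 hb2
    exact (collapse_lt (perm_ne_of_ne p ha1 ha2 h1 h2 ha3)
      (perm_ne_of_ne p hb1 hb2 h1 h2 hb3) hu.1 hv.1)
  · rintro q hq; simp only [delAtAux_sh] at hq; exact absurd hq (by simp)
  · rintro q hq; simp only [delAtAux_sh] at hq; exact absurd hq (by simp)
lemma eq_delAt_of_le {c d : MeshPattern} (h : c ≤ d) (hlen : c.len + 1 = d.len)
    (hd : d.sh = ∅) :
    ∃ x, ∃ (h1 : 1 ≤ x) (h2 : x ≤ d.len), c = delAtAux d x h1 h2 := by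
  obtain ⟨η, occ⟩ := h
  have hrange : ∀ i, 1 ≤ i → i ≤ c.len → i ≤ η i ∧ η i ≤ i + 1 := by
    intro i h1 h2
    constructor
    · have := occ.incr (i := 1) (j := i) le_rfl h1 h2
      have := (occ.mem 1 le_rfl (by omega)).1
      omega
    · have := occ.incr (i := i) (j := c.len) h1 h2 le_rfl
      have := (occ.mem c.len (by omega) le_rfl).2
      omega
  by_cases hx : ∃ i, 1 ≤ i ∧ i ≤ c.len ∧ η i ≠ i
  · obtain ⟨x, hx1, hx2, hx3, hmin⟩ : ∃ x, 1 ≤ x ∧ x ≤ c.len ∧ η x ≠ x ∧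
        ∀ i < x, ¬(1 ≤ i ∧ i ≤ c.len ∧ η i ≠ i) :=
      ⟨Nat.find hx, (Nat.find_spec hx).1, (Nat.find_spec hx).2.1,
        (Nat.find_spec hx).2.2, fun i hi => Nat.find_min hx hi⟩
    clear hx
    have hkey : ∀ i, 1 ≤ i → i ≤ c.len → η i = if i < x then i else i + 1 := by
      intro i h1 h2
      split_ifs with hcmp
      · by_contra hne
        exact hmin i hcmp ⟨h1, h2, hne⟩
      · have h5 := hrange x hx1 hx2
        have hx4 : η x = x + 1 := by omega
        have := occ.incr (i := x) (j := i) hx1 (by omega) h2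
        have := hrange i h1 h2
        omega
    refine ⟨x, hx1, by omega, ?_⟩
    refine ext' (by simp only [delAtAux_len]; omega) ?_ (by rw [occ.sh_empty hd]; rfl)
    rw [delAtAux_perm]
    apply perm_eq_of_iso c (delAtAux d x hx1 (by omega)) (by simp only [delAtAux_len]; omega)
    intro i j h1 h2 h3 h4
    have hpat := occ.pattern i j h1 h2 h3 h4
    have hei : η i = etaDel d x i := by
      rw [hkey i h1 h2, etaDel_eval d x i h1 (by omega)]
    have hej : η j = etaDel d x j := by
      rw [hkey j h3 h4, etaDel_eval d x j h3 (by omega)]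
    rw [hei, hej] at hpat
    rw [hpat]
    show _ ↔ delPerm d x i < delPerm d x j
    rw [delPerm_eval d x i h1 (by omega), delPerm_eval d x j h3 (by omega)]
    obtain ⟨ha1, ha2, ha3⟩ := etaDel_mem d hx1 (by omega) h1 (by omega)
    obtain ⟨hb1, hb2, hb3⟩ := etaDel_mem d hx1 (by omega) h3 (by omega)
    have hu := d.perm_mem _ ha1 ha2
    have hv := d.perm_mem _ hb1 hb2
    exact (collapse_lt (perm_ne_of_ne d ha1 ha2 hx1 (by omega) ha3)
      (perm_ne_of_ne d hb1 hb2 hx1 (by omega) hb3) hu.1 hv.1).symm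
  · push_neg at hx
    have hdl : 1 ≤ d.len := by omega
    refine ⟨d.len, hdl, le_rfl, ?_⟩
    have hkey : ∀ i, 1 ≤ i → i ≤ c.len → η i = i := by
      intro i h1 h2
      exact hx i h1 h2
    refine ext' (by simp only [delAtAux_len]; omega) ?_ (by rw [occ.sh_empty hd]; rfl)
    rw [delAtAux_perm]
    apply perm_eq_of_iso c (delAtAux d d.len hdl le_rfl) (by simp only [delAtAux_len]; omega)
    intro i j h1 h2 h3 h4
    have hpat := occ.pattern i j h1 h2 h3 h4
    have hei : η i = etaDel d d.len i := by
      rw [hkey i h1 h2, etaDel_eval d d.len i h1 (by omega)]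
      rw [if_pos (by omega)]
    have hej : η j = etaDel d d.len j := by
      rw [hkey j h3 h4, etaDel_eval d d.len j h3 (by omega)]
      rw [if_pos (by omega)]
    rw [hei, hej] at hpat
    rw [hpat]
    show _ ↔ delPerm d d.len i < delPerm d d.len j
    rw [delPerm_eval d d.len i h1 (by omega), delPerm_eval d d.len j h3 (by omega)]
    obtain ⟨ha1, ha2, ha3⟩ := etaDel_mem d hdl le_rfl h1 (by omega)
    obtain ⟨hb1, hb2, hb3⟩ := etaDel_mem d hdl le_rfl h3 (by omega)
    have hu := d.perm_mem _ ha1 ha2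
    have hv := d.perm_mem _ hb1 hb2
    exact (collapse_lt (perm_ne_of_ne d ha1 ha2 hdl le_rfl ha3)
      (perm_ne_of_ne d hb1 hb2 hdl le_rfl hb3) hu.1 hv.1).symm
/-- The odds-then-evens permutation `1 3 5 ... (2k-1) 2 4 6 ... (2k)` as an unshaded
mesh pattern. -/
def OEp (k : ℕ) : MeshPattern where
  len := 2*k
  perm := fun i => if 1 ≤ i ∧ i ≤ 2*k then (if i ≤ k then 2*i - 1 else 2*(i-k)) else 0
  sh := ∅
  perm_mem := by intro i h1 h2; (try dsimp only); split_ifs <;> omega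
  perm_zero := by intro i h; (try dsimp only); rw [if_neg (by omega)]
  perm_inj := by
    intro i j h1 h2 h3 h4 h
    (try dsimp only at h)
    revert h; split_ifs <;> (intro h; omega)
  perm_surj := by
    intro v h1 h2
    refine ⟨if v % 2 = 1 then (v+1)/2 else k + v/2, ?_, ?_, ?_⟩
    · split_ifs <;> omega
    · split_ifs <;> omega
    · (try dsimp only)
      split_ifs <;> omega
  sh_mem := by simp

@[simp] lemma OEp_len (k : ℕ) : (OEp k).len = 2*k := rfl
@[simp] lemma OEp_sh (k : ℕ) : (OEp k).sh = ∅ := rfl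
lemma OEp_perm (k i : ℕ) :
    (OEp k).perm i = if 1 ≤ i ∧ i ≤ 2*k then (if i ≤ k then 2*i - 1 else 2*(i-k)) else 0 := rfl

lemma OE_le_OE (k : ℕ) (hk : 1 ≤ k) : OEp (k-1) ≤ OEp k := by
  refine ⟨fun i => if 1 ≤ i ∧ i ≤ 2*(k-1) then (if i ≤ k-1 then i else i+1) else 0, ?_⟩
  constructor
  · intro i h; simp only [OEp_len] at h; rw [if_neg (by omega)]
  · intro i h1 h2; simp only [OEp_len] at h2 ⊢; split_ifs <;> omega
  · intro i j h1 h2 h3; simp only [OEp_len] at h3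
    (try dsimp only); split_ifs <;> omega
  · intro i j h1 h2 h3 h4
    simp only [OEp_len] at h2 h4
    simp only [OEp_perm]
    split_ifs <;> omega
  · rintro q hq; simp only [OEp_sh] at hq; exact absurd hq (by simp)
  · rintro q hq; simp only [OEp_sh] at hq; exact absurd hq (by simp)
set_option maxHeartbeats 2000000 in
lemma delPerm_OE (k x i : ℕ) (hx1 : 1 ≤ x) (hx2 : x ≤ 2*k) (hi1 : 1 ≤ i)
    (hi2 : i ≤ 2*k - 1) :
    delPerm (OEp k) x i =
      if x ≤ k then
        (if i ≤ x - 1 then 2*i - 1 else if i ≤ k - 1 then 2*i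
         else if i ≤ k + x - 2 then 2*(i-k) + 2 else 2*(i-k) + 1)
      else
        (if i ≤ x - k then 2*i - 1 else if i ≤ k then 2*i - 2
         else if i ≤ x - 1 then 2*(i-k) else 2*(i-k) + 1) := by
  have hlen : i ≤ (OEp k).len - 1 := by simp only [OEp_len]; omega
  rw [delPerm_eval _ x i hi1 hlen, etaDel_eval _ x i hi1 hlen]
  simp only [OEp_perm]
  split_ifs <;> omega

set_option maxHeartbeats 2000000 in
lemma delPerm_OE_inj {k x1 x2 : ℕ} (hk : 3 ≤ k) (h11 : 1 ≤ x1) (h12 : x1 ≤ 2*k)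
    (h21 : 1 ≤ x2) (h22 : x2 ≤ 2*k)
    (h : delPerm (OEp k) x1 = delPerm (OEp k) x2) : x1 = x2 := by
  by_contra hne
  rcases le_or_gt x1 k with c1 | c1 <;> rcases le_or_gt x2 k with c2 | c2
  · have hc := congrFun h (min x1 x2)
    rw [delPerm_OE k x1 (min x1 x2) h11 h12 (by omega) (by omega),
        delPerm_OE k x2 (min x1 x2) h21 h22 (by omega) (by omega)] at hc
    split_ifs at hc <;> omega
  · rcases Nat.eq_or_lt_of_le h11 with c3 | c3
    · have hc := congrFun h 1
      rw [delPerm_OE k x1 1 h11 h12 (by omega) (by omega),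
          delPerm_OE k x2 1 h21 h22 (by omega) (by omega)] at hc
      split_ifs at hc <;> omega
    · have hc := congrFun h k
      rw [delPerm_OE k x1 k h11 h12 (by omega) (by omega),
          delPerm_OE k x2 k h21 h22 (by omega) (by omega)] at hc
      split_ifs at hc <;> omega
  · rcases Nat.eq_or_lt_of_le h21 with c3 | c3
    · have hc := congrFun h 1
      rw [delPerm_OE k x1 1 h11 h12 (by omega) (by omega),
          delPerm_OE k x2 1 h21 h22 (by omega) (by omega)] at hc
      split_ifs at hc <;> omega
    · have hc := congrFun h k
      rw [delPerm_OE k x1 k h11 h12 (by omega) (by omega),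
          delPerm_OE k x2 k h21 h22 (by omega) (by omega)] at hc
      split_ifs at hc <;> omega
  · have hc := congrFun h (min x1 x2)
    rw [delPerm_OE k x1 (min x1 x2) h11 h12 (by omega) (by omega),
        delPerm_OE k x2 (min x1 x2) h21 h22 (by omega) (by omega)] at hc
    split_ifs at hc <;> omega

set_option maxHeartbeats 4000000 in
lemma delPerm_delAt_OE (k x : ℕ) (hk : 3 ≤ k) (hx1 : 1 ≤ x) (hx2 : x ≤ (OEp k).len) :
    delPerm (delAtAux (OEp k) x hx1 hx2) (if x ≤ k then k+x-1 else x-k) =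
      (OEp (k-1)).perm := by
  have hx2' : x ≤ 2*k := by simpa using hx2
  funext i
  have hqlen : (delAtAux (OEp k) x hx1 hx2).len = 2*k - 1 := by simp
  by_cases hi : 1 ≤ i ∧ i ≤ 2*k - 2
  · rcases le_or_gt x k with hxk | hxk
    · rw [if_pos hxk]
      rw [delPerm_eval _ (k+x-1) i hi.1 (by rw [hqlen]; omega),
          etaDel_eval _ (k+x-1) i hi.1 (by rw [hqlen]; omega)]
      rw [delAtAux_perm]
      rw [delPerm_OE k x (if i < k+x-1 then i else i+1) hx1 hx2'
            (by split_ifs <;> omega) (by split_ifs <;> omega),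
          delPerm_OE k x (k+x-1) hx1 hx2' (by omega) (by omega),
          OEp_perm]
      split_ifs <;> omega
    · rw [if_neg (by omega)]
      rw [delPerm_eval _ (x-k) i hi.1 (by rw [hqlen]; omega),
          etaDel_eval _ (x-k) i hi.1 (by rw [hqlen]; omega)]
      rw [delAtAux_perm]
      rw [delPerm_OE k x (if i < x-k then i else i+1) hx1 hx2'
            (by split_ifs <;> omega) (by split_ifs <;> omega),
          delPerm_OE k x (x-k) hx1 hx2' (by omega) (by omega),
          OEp_perm]
      split_ifs <;> omega
  · rw [delPerm_zero _ _ i (by rw [hqlen]; omega), OEp_perm, if_neg (by omega)]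

lemma OE_le_delAt (k x : ℕ) (hk : 3 ≤ k) (hx1 : 1 ≤ x) (hx2 : x ≤ (OEp k).len) :
    OEp (k-1) ≤ delAtAux (OEp k) x hx1 hx2 := by
  have hx2' : x ≤ 2*k := by simpa using hx2
  have hx' : 1 ≤ (if x ≤ k then k+x-1 else x-k) ∧
      (if x ≤ k then k+x-1 else x-k) ≤ (delAtAux (OEp k) x hx1 hx2).len := by
    simp only [delAtAux_len, OEp_len]
    constructor <;> (split_ifs <;> omega)
  have heq : OEp (k-1) = delAtAux (delAtAux (OEp k) x hx1 hx2)
      (if x ≤ k then k+x-1 else x-k) hx'.1 hx'.2 := by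
    refine ext' ?_ ?_ rfl
    · simp only [delAtAux_len, OEp_len]; omega
    · rw [delAtAux_perm, delPerm_delAt_OE k x hk hx1 hx2]
  rw [heq]
  exact delAtAux_le _ _ _ _
lemma neq_of_len {a b : MeshPattern} (h : a.len ≠ b.len) : a ≠ b :=
  fun hc => h (congrArg MeshPattern.len hc)

lemma interval_classify {k : ℕ} (hk : 3 ≤ k) (c : MeshPattern)
    (h1 : OEp (k-1) ≤ c) (h2 : c ≤ OEp k) :
    c = OEp (k-1) ∨ c = OEp k ∨
      ∃ x, ∃ (hx1 : 1 ≤ x) (hx2 : x ≤ (OEp k).len), c = delAtAux (OEp k) x hx1 hx2 := by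
  obtain ⟨η2, occ2⟩ := id h2
  have hcsh : c.sh = ∅ := occ2.sh_empty (OEp_sh k)
  have hlow : 2*(k-1) ≤ c.len := by
    obtain ⟨η1, occ1⟩ := h1
    have := occ1.len_le'
    simpa using this
  have hhigh : c.len ≤ 2*k := by
    have := occ2.len_le'
    simpa using this
  rcases Nat.lt_or_ge c.len (2*k-1) with hc | hc
  · left
    have := eq_of_le_same_len h1 (by simp; omega) hcsh
    exact this.symm
  rcases Nat.lt_or_ge c.len (2*k) with hc2 | hc2
  · right; right
    obtain ⟨x, hx1, hx2, hx3⟩ := eq_delAt_of_le h2 (by simp; omega) (OEp_sh k)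
    exact ⟨x, hx1, hx2, hx3⟩
  · right; left
    exact eq_of_le_same_len h2 (by simp; omega) (OEp_sh k)

lemma interval_classify2 {k x : ℕ} (hk : 3 ≤ k) (hx1 : 1 ≤ x) (hx2 : x ≤ (OEp k).len)
    (d : MeshPattern) (h1 : OEp (k-1) ≤ d) (h2 : d ≤ delAtAux (OEp k) x hx1 hx2) :
    d = OEp (k-1) ∨ d = delAtAux (OEp k) x hx1 hx2 := by
  obtain ⟨η2, occ2⟩ := id h2
  have hdsh : d.sh = ∅ := occ2.sh_empty (delAtAux_sh _ _ _ _)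
  have hlow : 2*(k-1) ≤ d.len := by
    obtain ⟨η1, occ1⟩ := h1
    have := occ1.len_le'
    simpa using this
  have hhigh : d.len ≤ 2*k - 1 := by
    have := occ2.len_le'
    simpa using this
  rcases Nat.lt_or_ge d.len (2*k-1) with hc | hc
  · left
    exact (eq_of_le_same_len h1 (by simp; omega) hdsh).symm
  · right
    exact eq_of_le_same_len h2 (by simp; omega) (delAtAux_sh _ _ _ _)

lemma muFuel_self {α : Type*} (r : α → α → Prop) (n : ℕ) (a : α) :
    muFuel r n a a = 1 := by
  cases n <;> simp [muFuel]

lemma muFuel_succ {α : Type*} (r : α → α → Prop) (n : ℕ) (a b : α)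
    (h1 : a ≠ b) (h2 : r a b) :
    muFuel r (n+1) a b = - ∑ᶠ c ∈ {c | r a c ∧ r c b ∧ c ≠ b}, muFuel r n a c := by
  simp only [muFuel, if_neg h1, if_pos h2]

lemma child_mu {k x : ℕ} (hk : 3 ≤ k) (hx1 : 1 ≤ x) (hx2 : x ≤ (OEp k).len) (n : ℕ) :
    muFuel (· ≤ ·) (n+1) (OEp (k-1)) (delAtAux (OEp k) x hx1 hx2) = -1 := by
  have hne : OEp (k-1) ≠ delAtAux (OEp k) x hx1 hx2 :=
    neq_of_len (by simp; omega)
  rw [muFuel_succ _ _ _ _ hne (OE_le_delAt k x hk hx1 hx2)]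
  have hset : {d | OEp (k-1) ≤ d ∧ d ≤ delAtAux (OEp k) x hx1 hx2 ∧
      d ≠ delAtAux (OEp k) x hx1 hx2} = {OEp (k-1)} := by
    ext d
    simp only [Set.mem_setOf_eq, Set.mem_singleton_iff]
    constructor
    · rintro ⟨hd1, hd2, hd3⟩
      rcases interval_classify2 hk hx1 hx2 d hd1 hd2 with h | h
      · exact h
      · exact absurd h hd3
    · rintro rfl
      exact ⟨le_refl' _, OE_le_delAt k x hk hx1 hx2, hne⟩
  rw [hset, finsum_mem_singleton, muFuel_self]

lemma OE_dim (k : ℕ) : (OEp k).dim = 2*k := by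
  simp [dim]

lemma mu_OE {k : ℕ} (hk : 3 ≤ k) : mu (OEp (k-1)) (OEp k) = 2*(k:ℤ) - 1 := by
  classical
  have hne : OEp (k-1) ≠ OEp k := neq_of_len (by simp; omega)
  have hle : OEp (k-1) ≤ OEp k := OE_le_OE k (by omega)
  have h2k : (OEp k).dim = (2*k-1)+1 := by rw [OE_dim]; omega
  rw [mu, muFuel_succ _ _ _ _ hne hle, h2k]
  have hset : {c | OEp (k-1) ≤ c ∧ c ≤ OEp k ∧ c ≠ OEp k} =
      ↑(insert (OEp (k-1)) ((Finset.Icc 1 (2*k)).image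
        (fun x => if h : 1 ≤ x ∧ x ≤ (OEp k).len then
          delAtAux (OEp k) x h.1 h.2 else OEp k))) := by
    ext c
    simp only [Set.mem_setOf_eq, Finset.coe_insert, Set.mem_insert_iff, Finset.coe_image,
      Set.mem_image, Finset.mem_coe, Finset.mem_Icc]
    constructor
    · rintro ⟨h1, h2, h3⟩
      rcases interval_classify hk c h1 h2 with h | h | ⟨x, hx1, hx2, hx3⟩
      · left; exact h
      · exact absurd h h3
      · right
        refine ⟨x, ⟨hx1, by simpa using hx2⟩, ?_⟩
        rw [hx3]
        exact dif_pos ⟨hx1, hx2⟩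
    · rintro (rfl | ⟨x, ⟨hx1, hx2⟩, rfl⟩)
      · exact ⟨le_refl' _, hle, hne⟩
      · have hx2' : x ≤ (OEp k).len := by simpa using hx2
        rw [dif_pos ⟨hx1, hx2'⟩]
        exact ⟨OE_le_delAt k x hk hx1 hx2', delAtAux_le _ _ _ _,
          neq_of_len (by simp; omega)⟩
  rw [hset, finsum_mem_coe_finset]
  have hnotmem : OEp (k-1) ∉ ((Finset.Icc 1 (2*k)).image
      (fun x => if h : 1 ≤ x ∧ x ≤ (OEp k).len then
        delAtAux (OEp k) x h.1 h.2 else OEp k)) := by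
    simp only [Finset.mem_image, Finset.mem_Icc]
    rintro ⟨x, ⟨hx1, hx2⟩, hFx⟩
    have hx2' : x ≤ (OEp k).len := by simpa using hx2
    rw [dif_pos ⟨hx1, hx2'⟩] at hFx
    have := congrArg MeshPattern.len hFx
    simp at this
    omega
  rw [Finset.sum_insert hnotmem, muFuel_self]
  have hinj : ∀ x ∈ Finset.Icc 1 (2*k), ∀ y ∈ Finset.Icc 1 (2*k),
      (fun x => if h : 1 ≤ x ∧ x ≤ (OEp k).len then
        delAtAux (OEp k) x h.1 h.2 else OEp k) x =
      (fun x => if h : 1 ≤ x ∧ x ≤ (OEp k).len then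
        delAtAux (OEp k) x h.1 h.2 else OEp k) y → x = y := by
    intro x hx y hy hxy
    simp only [Finset.mem_Icc] at hx hy
    have hx2' : x ≤ (OEp k).len := by simp; omega
    have hy2' : y ≤ (OEp k).len := by simp; omega
    simp only [dif_pos (show 1 ≤ x ∧ x ≤ (OEp k).len from ⟨hx.1, hx2'⟩),
      dif_pos (show 1 ≤ y ∧ y ≤ (OEp k).len from ⟨hy.1, hy2'⟩)] at hxy
    have hperm := congrArg MeshPattern.perm hxy
    simp only [delAtAux_perm] at hperm
    exact delPerm_OE_inj hk hx.1 hx.2 hy.1 hy.2 hperm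
  rw [Finset.sum_image hinj]
  have hconst : ∀ x ∈ Finset.Icc 1 (2*k),
      muFuel (· ≤ ·) ((2*k-1)+1) (OEp (k-1))
        (if h : 1 ≤ x ∧ x ≤ (OEp k).len then delAtAux (OEp k) x h.1 h.2 else OEp k)
      = -1 := by
    intro x hx
    simp only [Finset.mem_Icc] at hx
    have hx2' : x ≤ (OEp k).len := by simp; omega
    rw [dif_pos ⟨hx.1, hx2'⟩]
    exact child_mu hk hx.1 hx2' (2*k-1)
  rw [Finset.sum_congr rfl hconst, Finset.sum_const, Nat.card_Icc]
  have hcard : 2*k + 1 - 1 = 2*k := by omega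
  rw [hcard, nsmul_eq_mul]
  push_cast
  ring

theorem mu_unbounded' : ∀ N : ℕ, ∃ m p : MeshPattern, m ≤ p ∧ (N : ℤ) < |mu m p| := by
  intro N
  refine ⟨OEp (N+2), OEp (N+3), ?_, ?_⟩
  · exact OE_le_OE (N+3) (by omega)
  · have h := mu_OE (k := N+3) (by omega)
    have h2 : mu (OEp (N+2)) (OEp (N+3)) = 2*((N:ℤ)+3) - 1 := by
      rw [show (N+2 : ℕ) = (N+3-1 : ℕ) from rfl, h]
      push_cast
      ring
    rw [h2, abs_of_nonneg (by omega)]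
    omega

/-- The Möbius function is unbounded on the mesh pattern poset. -/
theorem mu_unbounded : ∀ N : ℕ, ∃ m p : MeshPattern, m ≤ p ∧ (N : ℤ) < |mu m p| :=
  mu_unbounded'

end MeshPattern
end
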